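/- The family of elements B^m * A^n of H, indexed by pairs (m, n) ∈ ℕ × ℕ, is a basis of H as an F-vector space: it is linearly independent and its F-linear span is all of H. -/

import Mathlib

noncomputable section

inductive HWRel (F : Type) [Field F] :
    FreeAlgebra F (Fin 2) → FreeAlgebra F (Fin 2) → Prop
  | comm : HWRel F (FreeAlgebra.ι F 0 * FreeAlgebra.ι F 1)
      (FreeAlgebra.ι F 1 * FreeAlgebra.ι F 0 + 1)

abbrev HW (F : Type) [Field F] := RingQuot (HWRel F)

def HW.A (F : Type) [Field F] : HW F :=
  RingQuot.mkAlgHom F (HWRel F) (FreeAlgebra.ι F 0)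

def HW.B (F : Type) [Field F] : HW F :=
  RingQuot.mkAlgHom F (HWRel F) (FreeAlgebra.ι F 1)

namespace HWAux

open Polynomial

variable (F : Type) [Field F]

/-- Differentiation as an endomorphism of `F[X]`. -/
def D : Module.End F (Polynomial F) := Polynomial.derivative

/-- Multiplication by `X` as an endomorphism of `F[X]`. -/
def MX : Module.End F (Polynomial F) := LinearMap.mulLeft F (Polynomial.X)

lemma rel_holds :
    (FreeAlgebra.lift F ![D F, MX F]) (FreeAlgebra.ι F 0 * FreeAlgebra.ι F 1) =
      (FreeAlgebra.lift F ![D F, MX F]) (FreeAlgebra.ι F 1 * FreeAlgebra.ι F 0 + 1) := by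
  simp only [map_mul, map_add, map_one, FreeAlgebra.lift_ι_apply]
  show (D F) * (MX F) = (MX F) * (D F) + 1
  refine LinearMap.ext fun p => ?_
  simp only [Module.End.mul_apply, LinearMap.add_apply, Module.End.one_apply, D, MX,
    LinearMap.mulLeft_apply, Polynomial.derivative_mul, Polynomial.derivative_X, one_mul]
  ring

/-- The standard representation of the Heisenberg–Weyl algebra on `F[X]`. -/
def rep : HW F →ₐ[F] Module.End F (Polynomial F) :=
  RingQuot.liftAlgHom F ⟨FreeAlgebra.lift F ![D F, MX F], by
    rintro x y ⟨⟩; exact rel_holds F⟩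

lemma rep_A : rep F (HW.A F) = D F := by
  rw [HW.A, rep, RingQuot.liftAlgHom_mkAlgHom_apply, FreeAlgebra.lift_ι_apply]
  rfl

lemma rep_B : rep F (HW.B F) = MX F := by
  rw [HW.B, rep, RingQuot.liftAlgHom_mkAlgHom_apply, FreeAlgebra.lift_ι_apply]
  rfl

lemma rep_basis_apply (m n k : ℕ) :
    rep F (HW.B F ^ m * HW.A F ^ n) (Polynomial.X ^ k) =
      (Nat.descFactorial k n : F) • (Polynomial.X : Polynomial F) ^ (m + (k - n)) := by
  rw [map_mul, map_pow (rep F), map_pow (rep F), rep_A, rep_B, Module.End.mul_apply,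
    Module.End.pow_apply (D F)]
  have hd : (D F)^[n] (Polynomial.X ^ k : Polynomial F) =
      (Nat.descFactorial k n : F) • Polynomial.X ^ (k - n) := by
    simpa [D] using Polynomial.iterate_derivative_X_pow_eq_smul (R := F) k n
  rw [hd]
  simp [MX, LinearMap.pow_mulLeft, LinearMap.mulLeft_apply, mul_smul_comm, pow_add]

lemma li [CharZero F] : LinearIndependent F (fun p : ℕ × ℕ => HW.B F ^ p.1 * HW.A F ^ p.2) := by
  rw [linearIndependent_iff]
  intro l hl
  -- apply the representation and evaluate at `X ^ k`
  have key : ∀ k : ℕ,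
      ∑ p ∈ l.support, l p • ((Nat.descFactorial k p.2 : F) •
        (Polynomial.X : Polynomial F) ^ (p.1 + (k - p.2))) = 0 := by
    intro k
    have h1 : rep F (Finsupp.linearCombination F
        (fun p : ℕ × ℕ => HW.B F ^ p.1 * HW.A F ^ p.2) l) = 0 := by
      rw [hl, map_zero]
    rw [Finsupp.linearCombination_apply, Finsupp.sum, map_sum] at h1
    have h2 := congrArg (fun (f : Module.End F (Polynomial F)) =>
      f ((Polynomial.X : Polynomial F) ^ k)) h1
    simp only [LinearMap.zero_apply] at h2
    calc ∑ p ∈ l.support, l p • ((Nat.descFactorial k p.2 : F) •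
          (Polynomial.X : Polynomial F) ^ (p.1 + (k - p.2)))
        = (∑ p ∈ l.support, l p • rep F (HW.B F ^ p.1 * HW.A F ^ p.2))
            ((Polynomial.X : Polynomial F) ^ k) := by
          rw [LinearMap.sum_apply]
          refine Finset.sum_congr rfl fun p _ => ?_
          rw [LinearMap.smul_apply, rep_basis_apply]
      _ = 0 := by
          rw [← h2]
          congr 1
          refine Finset.sum_congr rfl fun p _ => ?_
          rw [map_smul]
    -- done
  -- Now prove all coefficients vanish, by strong induction on the second index.
  have main : ∀ k : ℕ, ∀ m : ℕ, l (m, k) = 0 := by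
    intro k
    induction k using Nat.strong_induction_on with
    | _ k IH =>
      intro m
      have hk := key k
      have hc := congrArg (fun q => Polynomial.coeff q m) hk
      simp only [Polynomial.finset_sum_coeff, Polynomial.coeff_smul,
        Polynomial.coeff_X_pow, Polynomial.coeff_zero, smul_eq_mul] at hc
      have hsingle : ∑ p ∈ l.support,
          l p * ((Nat.descFactorial k p.2 : F) *
            if m = p.1 + (k - p.2) then 1 else 0) =
          l (m, k) * ((Nat.descFactorial k k : F) *
            if m = m + (k - k) then 1 else 0) := by
        refine Finset.sum_eq_single (m, k) ?_ ?_
        · intro p _ hp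
          rcases lt_trichotomy p.2 k with h | h | h
          · rw [IH p.2 h p.1, zero_mul]
          · have hpm : ¬ (m = p.1 + (k - p.2)) := by
              intro habs
              apply hp
              have : p.1 = m := by omega
              exact Prod.ext this h
            rw [if_neg hpm, mul_zero, mul_zero]
          · rw [Nat.descFactorial_eq_zero_iff_lt.mpr h]
            simp
        · intro hnot
          rw [Finsupp.notMem_support_iff.mp hnot, zero_mul]
      rw [hsingle] at hc
      simp only [Nat.sub_self, add_zero, Nat.descFactorial_self, eq_self_iff_true,
        if_true, mul_one] at hc
      have hfac : (Nat.factorial k : F) ≠ 0 := by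
        exact_mod_cast Nat.factorial_ne_zero k
      exact (mul_eq_zero.mp hc).resolve_right hfac
  ext p
  exact main p.2 p.1

lemma comm1 : HW.A F * HW.B F = HW.B F * HW.A F + 1 := by
  have := RingQuot.mkAlgHom_rel F (HWRel.comm (F := F))
  simpa only [map_mul, map_add, map_one, HW.A, HW.B] using this

lemma commn (n : ℕ) :
    HW.A F ^ (n + 1) * HW.B F = HW.B F * HW.A F ^ (n + 1) + ((n : F) + 1) • HW.A F ^ n := by
  induction n with
  | zero => simpa using comm1 F
  | succ n ih =>
    have h2 : HW.A F ^ (n + 2) * HW.B F = HW.A F * (HW.A F ^ (n + 1) * HW.B F) := by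
      rw [pow_succ', mul_assoc]
    have h3 : ((↑(n + 1) : F) + 1) = ((n : F) + 1) + 1 := by push_cast; ring
    rw [h2, ih, mul_add, mul_smul_comm, ← mul_assoc, comm1, add_mul, one_mul, mul_assoc,
      ← pow_succ', ← pow_succ', h3, add_smul, one_smul, add_assoc,
      add_comm (HW.A F ^ (n + 1))]
    rw [add_smul, add_smul, one_smul]

lemma span_top :
    Submodule.span F
      (Set.range fun p : ℕ × ℕ => HW.B F ^ p.1 * HW.A F ^ p.2) = ⊤ := by
  set S := Submodule.span F
      (Set.range fun p : ℕ × ℕ => HW.B F ^ p.1 * HW.A F ^ p.2) with hS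
  have hgen : ∀ m n : ℕ, HW.B F ^ m * HW.A F ^ n ∈ S :=
    fun m n => Submodule.subset_span ⟨(m, n), rfl⟩
  have hA : ∀ x ∈ S, x * HW.A F ∈ S := by
    intro x hx
    refine Submodule.span_induction ?_ ?_ ?_ ?_ hx
    · rintro _ ⟨⟨m, n⟩, rfl⟩
      have : (HW.B F ^ m * HW.A F ^ n) * HW.A F = HW.B F ^ m * HW.A F ^ (n + 1) := by
        rw [pow_succ, mul_assoc]
      rw [this]; exact hgen m (n + 1)
    · simp
    · intro a b _ _ ha hb
      rw [add_mul]; exact S.add_mem ha hb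
    · intro c a _ ha
      rw [smul_mul_assoc]; exact S.smul_mem c ha
  have hB : ∀ x ∈ S, x * HW.B F ∈ S := by
    intro x hx
    refine Submodule.span_induction ?_ ?_ ?_ ?_ hx
    · rintro _ ⟨⟨m, n⟩, rfl⟩
      cases n with
      | zero =>
        have : (HW.B F ^ m * HW.A F ^ 0) * HW.B F = HW.B F ^ (m + 1) * HW.A F ^ 0 := by
          simp [pow_succ]
        rw [this]; exact hgen (m + 1) 0
      | succ n =>
        have : (HW.B F ^ m * HW.A F ^ (n + 1)) * HW.B F =
            HW.B F ^ (m + 1) * HW.A F ^ (n + 1) + ((n : F) + 1) • (HW.B F ^ m * HW.A F ^ n) := by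
          rw [mul_assoc, commn F n, mul_add, mul_smul_comm, ← mul_assoc, ← pow_succ]
        rw [this]
        exact S.add_mem (hgen (m + 1) (n + 1)) (S.smul_mem _ (hgen m n))
    · simp
    · intro a b _ _ ha hb
      rw [add_mul]; exact S.add_mem ha hb
    · intro c a _ ha
      rw [smul_mul_assoc]; exact S.smul_mem c ha
  have key : ∀ w : FreeAlgebra F (Fin 2), ∀ x ∈ S,
      x * RingQuot.mkAlgHom F (HWRel F) w ∈ S := by
    intro w
    induction w using FreeAlgebra.induction with
    | grade0 r =>
      intro x hx
      rw [AlgHom.commutes, ← Algebra.commutes r, ← Algebra.smul_def]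
      exact S.smul_mem r hx
    | grade1 i =>
      intro x hx
      fin_cases i
      · exact hA x hx
      · exact hB x hx
    | mul u v ihu ihv =>
      intro x hx
      rw [map_mul, ← mul_assoc]
      exact ihv _ (ihu x hx)
    | add u v ihu ihv =>
      intro x hx
      rw [map_add, mul_add]
      exact S.add_mem (ihu x hx) (ihv x hx)
  rw [eq_top_iff]
  intro y _
  obtain ⟨w, rfl⟩ := RingQuot.mkAlgHom_surjective F (HWRel F) y
  have h1 : (1 : HW F) ∈ S := by simpa using hgen 0 0
  simpa using key w 1 h1

end HWAux

/-- The family `B^m * A^n`, for `(m, n) ∈ ℕ × ℕ`, is a vector-space basis of the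
Heisenberg–Weyl algebra: it is linearly independent and spans. -/
theorem hw_basis (F : Type) [Field F] [CharZero F] :
    LinearIndependent F (fun p : ℕ × ℕ => HW.B F ^ p.1 * HW.A F ^ p.2) ∧
      Submodule.span F
        (Set.range fun p : ℕ × ℕ => HW.B F ^ p.1 * HW.A F ^ p.2) = ⊤ := by
  exact ⟨HWAux.li F, HWAux.span_top F⟩
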